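/- Let X be a bounded nonnegative random variable with expectation μ and distribution function G, and define Φ(x) = ∫_0^x G(t) dt. Then (1/2)·Var(X) = ∫_0^∞ (Φ(t) − max(t − μ, 0)) dt. -/

import Mathlib

open MeasureTheory ProbabilityTheory

lemma aux_maxint (x T : ℝ) (hx : 0 ≤ x) (hxT : x ≤ T) :
    ∫ t in Set.Ioc (0:ℝ) T, max (t - x) 0 = (T - x)^2 / 2 := by
  have hcont : Continuous (fun t : ℝ => max (t - x) 0) :=
    (continuous_id.sub continuous_const).max continuous_const
  have h0T : (0:ℝ) ≤ T := le_trans hx hxT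
  rw [← intervalIntegral.integral_of_le h0T]
  have h1 : ∫ t in (0:ℝ)..x, max (t - x) 0 = 0 := by
    rw [intervalIntegral.integral_congr (g := fun _ => (0:ℝ))]
    · simp
    · intro t ht
      rw [Set.uIcc_of_le hx] at ht
      exact max_eq_right (by linarith [ht.2])
  have h2 : ∫ t in x..T, max (t - x) 0 = (T - x)^2 / 2 := by
    rw [intervalIntegral.integral_congr (g := fun t => t - x)]
    · rw [intervalIntegral.integral_sub intervalIntegral.intervalIntegrable_id
        intervalIntegrable_const, integral_id, intervalIntegral.integral_const]
      simp only [smul_eq_mul]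
      ring
    · intro t ht
      rw [Set.uIcc_of_le hxT] at ht
      exact max_eq_left (by linarith [ht.1])
  have hadd := intervalIntegral.integral_add_adjacent_intervals
    (a := 0) (b := x) (c := T) (μ := volume)
    (hcont.intervalIntegrable 0 x) (hcont.intervalIntegrable x T)
  rw [← hadd, h1, h2, zero_add]

lemma aux_phi {Ω : Type*} [MeasurableSpace Ω] (P : Measure Ω) [IsProbabilityMeasure P]
    (X : Ω → ℝ) (hX : Measurable X) (hX0 : ∀ ω, 0 ≤ X ω) (t : ℝ) :
    ∫ s in Set.Ioc (0:ℝ) t, (P {ω | X ω ≤ s}).toReal = ∫ ω, max (t - X ω) 0 ∂P := by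
  have hfin : IsFiniteMeasure (volume.restrict (Set.Ioc (0:ℝ) t)) := by
    constructor
    rw [Measure.restrict_apply_univ, Real.volume_Ioc]
    exact ENNReal.ofReal_lt_top
  set f : ℝ → Ω → ℝ := fun s ω => if X ω ≤ s then 1 else 0 with hf
  have hmeas : Measurable (Function.uncurry f) := by
    refine Measurable.ite ?_ measurable_const measurable_const
    exact measurableSet_le (hX.comp measurable_snd) measurable_fst
  have hint : Integrable (Function.uncurry f)
      ((volume.restrict (Set.Ioc (0:ℝ) t)).prod P) := by
    refine (integrable_const (1:ℝ)).mono' hmeas.aestronglyMeasurable ?_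
    filter_upwards with p
    simp only [Function.uncurry, f]
    split <;> simp
  have step1 : ∫ s in Set.Ioc (0:ℝ) t, (P {ω | X ω ≤ s}).toReal
      = ∫ s in Set.Ioc (0:ℝ) t, ∫ ω, f s ω ∂P := by
    refine integral_congr_ae (ae_of_all _ fun s => ?_)
    have : ∀ ω, f s ω = Set.indicator {ω | X ω ≤ s} (1 : Ω → ℝ) ω := by
      intro ω; simp [f, Set.indicator_apply, Set.mem_setOf_eq]
    simp only [this]
    rw [integral_indicator_one (measurableSet_le hX measurable_const)]
    rfl
  have step2 : ∫ s in Set.Ioc (0:ℝ) t, ∫ ω, f s ω ∂P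
      = ∫ ω, ∫ s in Set.Ioc (0:ℝ) t, f s ω ∂volume ∂P :=
    integral_integral_swap hint
  have step3 : ∀ ω, ∫ s in Set.Ioc (0:ℝ) t, f s ω ∂volume = max (t - X ω) 0 := by
    intro ω
    have : ∀ s, f s ω = Set.indicator (Set.Ici (X ω)) (1 : ℝ → ℝ) s := by
      intro s; simp [f, Set.indicator_apply, Set.mem_Ici]
    simp only [this]
    rw [setIntegral_indicator measurableSet_Ici]
    simp only [Pi.one_apply]
    rw [setIntegral_const, smul_eq_mul, mul_one]
    have hvol : volume (Set.Ioc (0:ℝ) t ∩ Set.Ici (X ω)) = ENNReal.ofReal (t - X ω) := by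
      rcases eq_or_lt_of_le (hX0 ω) with h | h
      · have : Set.Ioc (0:ℝ) t ∩ Set.Ici (X ω) = Set.Ioc 0 t := by
          apply Set.inter_eq_left.mpr
          intro s hs
          exact le_of_lt (lt_of_le_of_lt (le_of_eq h.symm) hs.1)
        rw [this, Real.volume_Ioc, ← h, sub_zero]
      · have : Set.Ioc (0:ℝ) t ∩ Set.Ici (X ω) = Set.Icc (X ω) t := by
          ext s
          simp only [Set.mem_inter_iff, Set.mem_Ioc, Set.mem_Ici, Set.mem_Icc]
          constructor
          · rintro ⟨⟨_, h2⟩, h3⟩; exact ⟨h3, h2⟩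
          · rintro ⟨h3, h2⟩; exact ⟨⟨lt_of_lt_of_le h h3, h2⟩, h3⟩
        rw [this, Real.volume_Icc]
    rw [measureReal_def, hvol, ENNReal.toReal_ofReal']
  rw [step1, step2]
  exact integral_congr_ae (ae_of_all _ step3)

/-- For a bounded nonnegative random variable `X` with mean `μ`, distribution function
`G` and `Φ(x) = ∫_0^x G(t) dt`, one has
`(1/2)·Var(X) = ∫_0^∞ (Φ(t) − max (t − μ) 0) dt`. -/
theorem half_variance_integral_formula
    {Ω : Type*} [MeasurableSpace Ω] (P : Measure Ω) [IsProbabilityMeasure P]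
    (X : Ω → ℝ) (hX : Measurable X) (C : ℝ)
    (hbdd : ∀ ω, X ω ∈ Set.Icc 0 C)
    (μ : ℝ) (hμ : μ = ∫ ω, X ω ∂P)
    (G : ℝ → ℝ) (hG : ∀ t, G t = (P {ω | X ω ≤ t}).toReal)
    (Φ : ℝ → ℝ) (hΦ : ∀ x, Φ x = ∫ t in (0:ℝ)..x, G t) :
    (1 / 2) * variance X P = ∫ t in Set.Ioi (0:ℝ), (Φ t - max (t - μ) 0) := by
  have hX0 : ∀ ω, 0 ≤ X ω := fun ω => (hbdd ω).1
  have hXC : ∀ ω, X ω ≤ C := fun ω => (hbdd ω).2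
  have hintX : Integrable X P := (integrable_const C).mono' hX.aestronglyMeasurable
    (ae_of_all _ fun ω => by rw [Real.norm_eq_abs, abs_of_nonneg (hX0 ω)]; exact hXC ω)
  have hμ0 : 0 ≤ μ := hμ ▸ integral_nonneg hX0
  have hμC : μ ≤ C := by
    rw [hμ]
    calc ∫ ω, X ω ∂P ≤ ∫ _ω, C ∂P := integral_mono hintX (integrable_const C) hXC
    _ = C := by simp
  have hC0 : 0 ≤ C := le_trans hμ0 hμC
  -- Φ as an expectation
  have hPhi : ∀ t : ℝ, 0 ≤ t → Φ t = ∫ ω, max (t - X ω) 0 ∂P := by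
    intro t ht
    rw [hΦ, intervalIntegral.integral_of_le ht]
    simp only [hG]
    exact aux_phi P X hX hX0 t
  -- integrand vanishes beyond C
  have hmean : ∀ t : ℝ, C ≤ t → Φ t - max (t - μ) 0 = 0 := by
    intro t ht
    have h0t : 0 ≤ t := le_trans hC0 ht
    have h1 : Φ t = t - μ := by
      rw [hPhi t h0t]
      rw [integral_congr_ae (ae_of_all _ (fun ω =>
        max_eq_left (by linarith [hXC ω]) : ∀ ω, max (t - X ω) 0 = t - X ω))]
      rw [integral_sub (integrable_const t) hintX, integral_const, ← hμ]
      simp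
    rw [h1, max_eq_left (by linarith : (0:ℝ) ≤ t - μ)]
    ring
  -- reduce the Ioi integral to Ioc 0 C
  have hred : ∫ t in Set.Ioi (0:ℝ), (Φ t - max (t - μ) 0)
      = ∫ t in Set.Ioc (0:ℝ) C, (Φ t - max (t - μ) 0) := by
    have heq : Set.EqOn (fun t => Φ t - max (t - μ) 0)
        (Set.indicator (Set.Ioc 0 C) (fun t => Φ t - max (t - μ) 0)) (Set.Ioi 0) := by
      intro t ht
      by_cases h : t ≤ C
      · rw [Set.indicator_of_mem (Set.mem_Ioc.mpr ⟨ht, h⟩)]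
      · rw [Set.indicator_of_notMem (fun hc => h hc.2)]
        exact hmean t (le_of_lt (not_le.mp h))
    rw [setIntegral_congr_fun measurableSet_Ioi heq,
      setIntegral_indicator measurableSet_Ioc,
      Set.inter_eq_right.mpr Set.Ioc_subset_Ioi_self]
  rw [hred]
  -- second Fubini
  have hfin : IsFiniteMeasure (volume.restrict (Set.Ioc (0:ℝ) C)) := by
    constructor
    rw [Measure.restrict_apply_univ, Real.volume_Ioc]
    exact ENNReal.ofReal_lt_top
  set g : ℝ → Ω → ℝ := fun t ω => max (t - X ω) 0 - max (t - μ) 0 with hg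
  have hgmeas : Measurable (Function.uncurry g) := by
    have huc : Function.uncurry g
        = fun p : ℝ × Ω => max (p.1 - X p.2) 0 - max (p.1 - μ) 0 := rfl
    rw [huc]
    exact ((measurable_fst.sub (hX.comp measurable_snd)).max measurable_const).sub
      ((measurable_fst.sub measurable_const).max measurable_const)
  have hgint : Integrable (Function.uncurry g)
      ((volume.restrict (Set.Ioc (0:ℝ) C)).prod P) := by
    refine (integrable_const C).mono' hgmeas.aestronglyMeasurable ?_
    filter_upwards with p
    rw [Real.norm_eq_abs]
    refine le_trans (abs_max_sub_max_le_abs _ _ _) ?_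
    have : (p.1 - X p.2) - (p.1 - μ) = μ - X p.2 := by ring
    rw [this]
    rw [abs_le]
    constructor <;> linarith [hμC, hμ0, hX0 p.2, hXC p.2]
  have hintmax : ∀ t : ℝ, Integrable (fun ω => max (t - X ω) 0) P := by
    intro t
    refine (integrable_const |t|).mono'
      ((measurable_const.sub hX).max measurable_const).aestronglyMeasurable ?_
    filter_upwards with ω
    rw [Real.norm_eq_abs, abs_of_nonneg (le_max_right _ _)]
    exact max_le (by linarith [hX0 ω, le_abs_self t]) (abs_nonneg t)
  have step1 : ∫ t in Set.Ioc (0:ℝ) C, (Φ t - max (t - μ) 0)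
      = ∫ t in Set.Ioc (0:ℝ) C, ∫ ω, g t ω ∂P := by
    refine setIntegral_congr_fun measurableSet_Ioc fun t ht => ?_
    have h0t : 0 ≤ t := le_of_lt ht.1
    rw [hPhi t h0t]
    rw [show (fun ω => g t ω) = fun ω => max (t - X ω) 0 - max (t - μ) 0 from rfl]
    rw [integral_sub (hintmax t) (integrable_const _), integral_const]
    simp
  have step2 : ∫ t in Set.Ioc (0:ℝ) C, ∫ ω, g t ω ∂P
      = ∫ ω, ∫ t in Set.Ioc (0:ℝ) C, g t ω ∂volume ∂P :=
    integral_integral_swap hgint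
  have step3 : ∀ ω, ∫ t in Set.Ioc (0:ℝ) C, g t ω ∂volume
      = (C - X ω)^2 / 2 - (C - μ)^2 / 2 := by
    intro ω
    have hca : Continuous (fun t : ℝ => max (t - X ω) 0) :=
      (continuous_id.sub continuous_const).max continuous_const
    have hcb : Continuous (fun t : ℝ => max (t - μ) 0) :=
      (continuous_id.sub continuous_const).max continuous_const
    rw [show (fun t => g t ω) = fun t => max (t - X ω) 0 - max (t - μ) 0 from rfl]
    rw [integral_sub (hca.integrableOn_Ioc) (hcb.integrableOn_Ioc)]
    rw [aux_maxint (X ω) C (hX0 ω) (hXC ω), aux_maxint μ C hμ0 hμC]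
  rw [step1, step2, integral_congr_ae (ae_of_all _ step3)]
  -- final algebra
  have hintX2 : Integrable (fun ω => X ω ^ 2) P := by
    refine (integrable_const (C^2)).mono' (hX.pow_const 2).aestronglyMeasurable ?_
    filter_upwards with ω
    rw [Real.norm_eq_abs, abs_of_nonneg (sq_nonneg _)]
    nlinarith [hX0 ω, hXC ω]
  have hmem : MemLp X 2 P :=
    MemLp.of_bound hX.aestronglyMeasurable C
      (ae_of_all _ fun ω => by rw [Real.norm_eq_abs, abs_of_nonneg (hX0 ω)]; exact hXC ω)
  have hvar : variance X P = (∫ ω, X ω ^ 2 ∂P) - μ^2 := by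
    rw [variance_eq_sub hmem, ← hμ]
    congr 1
  have expand : (fun ω => (C - X ω)^2 / 2 - (C - μ)^2 / 2)
      = fun ω => (1/2) * X ω ^ 2 + ((-C) * X ω + (C * μ - μ^2 / 2)) := by
    funext ω; ring
  have hA : Integrable (fun ω => (1:ℝ)/2 * X ω ^ 2) P := hintX2.const_mul _
  have hB : Integrable (fun ω => -C * X ω + (C * μ - μ^2/2)) P :=
    (hintX.const_mul _).add (integrable_const _)
  have hB1 : Integrable (fun ω => -C * X ω) P := hintX.const_mul _
  rw [expand, integral_add hA hB, integral_add hB1 (integrable_const _),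
    integral_const_mul, integral_const_mul, integral_const, ← hμ]
  simp only [probReal_univ, ENNReal.toReal_one, one_smul]
  rw [hvar]
  ring
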